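/- Let S be a finite monoid and let Γ ⊆ S × S be a set of pairs such that {(a,b)^♯ : (a,b) ∈ Γ} is exactly the set of all minimal two-sided congruences of S. Then an action μ : X × S → X of S (as a semigroup) is faithful if and only if for every (a,b) ∈ Γ there exists x ∈ X with μ(x,a) ≠ μ(x,b). -/

import Mathlib

namespace DiagramDeg

/-- Vertex set of a partition diagram: `inl` = upper row, `inr` = lower (dashed) row. -/
abbrev V (n : ℕ) := Sum (Fin n) (Fin n)

/-- A partition diagram on `n̲ ∪ n̲′`: a set partition, i.e. an equivalence, of the `2n` vertices. -/
abbrev PD (n : ℕ) := Setoid (V n)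

/-- Three-row vertex set for the product graph:
`inl` = top row, `inr ∘ inl` = middle row, `inr ∘ inr` = bottom row. -/
abbrev W (n : ℕ) := Sum (Fin n) (V n)

/-- Embedding of the vertices of the first factor (top and middle rows). -/
def topmid {n : ℕ} : V n → W n := Sum.elim Sum.inl (fun j => Sum.inr (Sum.inl j))

/-- Embedding of the vertices of the second factor (middle and bottom rows). -/
def midbot {n : ℕ} : V n → W n :=
  Sum.elim (fun i => Sum.inr (Sum.inl i)) (fun j => Sum.inr (Sum.inr j))

/-- Embedding of the outer (top and bottom) rows. -/
def outer {n : ℕ} : V n → W n := Sum.elim Sum.inl (fun j => Sum.inr (Sum.inr j))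

/-- The edges of the product graph `Π(α,β)`. -/
def stepRel {n : ℕ} (α β : PD n) : W n → W n → Prop := fun u v =>
  (∃ x y : V n, α.r x y ∧ u = topmid x ∧ v = topmid y) ∨
  (∃ x y : V n, β.r x y ∧ u = midbot x ∧ v = midbot y)

/-- The product `αβ` of partition diagrams: `x, y` lie in the same block of `αβ` iff they are
connected in the product graph. -/
def comp {n : ℕ} (α β : PD n) : PD n :=
  Setoid.comap outer (Relation.EqvGen.setoid (stepRel α β))

/-- The identity partition diagram, with blocks `{i, i′}`. -/
def idPD (n : ℕ) : PD n := Setoid.ker (Sum.elim id id)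

/-- The `*` involution of a diagram: interchange dashed and undashed vertices. -/
def starPD {n : ℕ} (α : PD n) : PD n := Setoid.comap (Sum.elim Sum.inr Sum.inl) α

/-- The rank of a diagram: the number of transversal blocks, i.e. blocks meeting both rows. -/
noncomputable def rank {n : ℕ} (α : PD n) : ℕ :=
  Nat.card {c : Quotient α //
    (∃ i : Fin n, Quotient.mk α (Sum.inl i) = c) ∧
    (∃ j : Fin n, Quotient.mk α (Sum.inr j) = c)}

/-- A projection: `ε² = ε = ε*`. -/
def IsProjection {n : ℕ} (α : PD n) : Prop := comp α α = α ∧ starPD α = α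

/-- `ker(α)`: the restriction of `α` to the upper row. -/
def upperKer {n : ℕ} (α : PD n) : Fin n → Fin n → Prop := fun x y =>
  α.r (Sum.inl x) (Sum.inl y)

/-- Every block has size at most 2 (defining property of the partial Brauer monoid). -/
def BlocksAtMostTwo {n : ℕ} (α : PD n) : Prop :=
  ∀ x y z : V n, α.r x y → α.r x z → x = y ∨ x = z ∨ y = z

/-- Every block has size exactly 2 (defining property of the Brauer monoid). -/
def BlocksExactlyTwo {n : ℕ} (α : PD n) : Prop :=
  BlocksAtMostTwo α ∧ ∀ x : V n, ∃ y : V n, y ≠ x ∧ α.r x y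

/-- Position of a vertex in the boundary order `1, …, n, n′, …, 1′` of the rectangle. -/
def vpos (n : ℕ) : V n → ℕ := Sum.elim (fun i => (i : ℕ)) (fun j => 2 * n - 1 - (j : ℕ))

/-- Planarity: the partition is non-crossing with respect to the boundary order of the
rectangle spanned by the vertices (two blocks never interleave). -/
def IsPlanar {n : ℕ} (α : PD n) : Prop :=
  ¬ ∃ x y z w : V n, α.r x y ∧ α.r z w ∧ ¬ α.r x z ∧
      vpos n x < vpos n z ∧ vpos n z < vpos n y ∧ vpos n y < vpos n w

/-- The number of projections of rank `r` satisfying `pred`. -/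
noncomputable def projCount (n : ℕ) (pred : PD n → Prop) (r : ℕ) : ℕ :=
  Nat.card {α : PD n // pred α ∧ IsProjection α ∧ rank α = r}

/-- A right action of a semigroup (we only use the `Mul`). -/
def IsRAction {S : Type*} {X : Type*} [Mul S] (μ : X → S → X) : Prop :=
  ∀ (x : X) (a b : S), μ (μ x a) b = μ x (a * b)

/-- An action is faithful if distinct elements act distinctly. -/
def IsFaithful {S : Type*} {X : Type*} (μ : X → S → X) : Prop :=
  ∀ a b : S, (∀ x : X, μ x a = μ x b) → a = b

/-- `deg(S)`: the least `m ≥ 1` such that `S` has a faithful action on an `m`-element set,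
equivalently embeds in the full transformation monoid `𝒯_m`. -/
noncomputable def transDeg (S : Type*) [Mul S] : ℕ :=
  sInf {m : ℕ | 1 ≤ m ∧ ∃ μ : Fin m → S → Fin m, IsRAction μ ∧ IsFaithful μ}

/-- `deg′(S)`: the least `m ≥ 1` such that `S` embeds in the partial transformation
monoid `𝒫𝒯_m`, viewed as the monoid of self-maps of `Option (Fin m)` fixing `none`. -/
noncomputable def pTransDeg (S : Type*) [Mul S] : ℕ :=
  sInf {m : ℕ | 1 ≤ m ∧ ∃ μ : Option (Fin m) → S → Option (Fin m),
    IsRAction μ ∧ (∀ a : S, μ none a = none) ∧ IsFaithful μ}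

/-- A right congruence: a right-compatible equivalence. -/
def IsRightCongruence {S : Type*} [Mul S] (σ : Setoid S) : Prop :=
  ∀ a b s : S, σ.r a b → σ.r (a * s) (b * s)

/-- `deg_rc(S)`: the least `m ≥ 1` such that `S` has a faithful right congruence action
(the action on `S/σ` by `[x]·a = [xa]`) of degree `m`. -/
noncomputable def rcDeg (S : Type*) [Monoid S] : ℕ :=
  sInf {m : ℕ | 1 ≤ m ∧ ∃ σ : Setoid S, IsRightCongruence σ ∧
    Nat.card (Quotient σ) = m ∧
    ∀ a b : S, (∀ x : S, Quotient.mk σ (x * a) = Quotient.mk σ (x * b)) → a = b}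

/-- A two-sided congruence, as a relation. -/
def IsTwoSidedCong {S : Type*} [Mul S] (τ : S → S → Prop) : Prop :=
  Equivalence τ ∧ ∀ a b s : S, τ a b → τ (a * s) (b * s) ∧ τ (s * a) (s * b)

/-- Bell numbers: the number of set partitions (equivalence relations) of a `k`-set. -/
noncomputable def bell (k : ℕ) : ℕ := Nat.card (Setoid (Fin k))

/-- Involution numbers: the number of self-inverse permutations of a `k`-set. -/
noncomputable def involNum (k : ℕ) : ℕ :=
  Nat.card {f : Equiv.Perm (Fin k) // ∀ x, f (f x) = x}

/-- Motzkin numbers, via the standard binomial–Catalan formula. -/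
def motzkin (k : ℕ) : ℕ := ∑ i ∈ Finset.range (k / 2 + 1), k.choose (2 * i) * catalan i

end DiagramDeg
namespace DiagramDeg

/-- Let `S` be a finite monoid and `Γ ⊆ S × S` a set of pairs such that
`{(a,b)^♯ : (a,b) ∈ Γ}` is exactly the set of minimal two-sided congruences of `S`.
Then an action `μ : X × S → X` is faithful iff it separates every pair from `Γ`. -/
theorem statement12 (S : Type) [Monoid S] [Finite S] (Γ : Set (S × S))
    (hΓ : {c : Con S | ∃ p ∈ Γ, c = conGen (fun x y => x = p.1 ∧ y = p.2)} =
          {c : Con S | c ≠ ⊥ ∧ ∀ d : Con S, d < c → d = ⊥})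
    (X : Type) (μ : X → S → X) (hact : IsRAction μ) :
    IsFaithful μ ↔ ∀ p ∈ Γ, ∃ x : X, μ x p.1 ≠ μ x p.2 := by
  have hset := Set.ext_iff.mp hΓ
  constructor
  · intro hf p hp
    have hmin := (hset (conGen (fun x y => x = p.1 ∧ y = p.2))).mp ⟨p, hp, rfl⟩
    by_contra hcon
    push_neg at hcon
    have hpe : p.1 = p.2 := hf p.1 p.2 hcon
    apply hmin.1
    rw [eq_bot_iff]
    apply Con.conGen_le.mpr
    rintro x y ⟨rfl, rfl⟩
    show (⊥ : Con S) p.1 p.2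
    rw [hpe]
    exact (⊥ : Con S).refl p.2
  · intro hsep a b hab
    -- τ : congruence of elements acting equally
    let τ : Con S :=
      { r := fun a b => ∀ x, μ x a = μ x b
        iseqv := ⟨fun _ _ => rfl, fun h x => (h x).symm, fun h h' x => (h x).trans (h' x)⟩
        mul' := by
          intro u v w z hu hw x
          have h1 : μ x (u * w) = μ (μ x u) w := (hact x u w).symm
          have h2 : μ x (v * z) = μ (μ x v) z := (hact x v z).symm
          rw [h1, h2, hu x, hw (μ x v)] }
    by_contra hne
    have hτne : τ ≠ ⊥ := by
      intro h
      exact hne (by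
        have : τ a b := hab
        rw [h] at this
        exact this)
    -- find a minimal congruence below τ
    have : Finite (Con S) := by
      have : Function.Injective (fun c : Con S => (c : S → S → Prop)) := by
        intro c d h
        ext x y
        exact iff_of_eq (congrFun (congrFun h x) y)
      exact Finite.of_injective _ this
    obtain ⟨d, ⟨hdτ, hdne⟩, hdmin⟩ :=
      (Set.toFinite {e : Con S | e ≤ τ ∧ e ≠ ⊥}).exists_minimal
        ⟨τ, le_refl _, hτne⟩
    have hdminC : ∀ e : Con S, e < d → e = ⊥ := by
      intro e he
      by_contra hebot
      have heq : d = e := le_antisymm (hdmin ⟨le_trans he.le hdτ, hebot⟩ he.le) he.le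
      exact absurd (heq ▸ he) (lt_irrefl d)
    obtain ⟨p, hpΓ, hpd⟩ := (hset d).mpr ⟨hdne, hdminC⟩
    obtain ⟨x, hx⟩ := hsep p hpΓ
    apply hx
    have hrel : d p.1 p.2 := by
      rw [hpd]
      exact ConGen.Rel.of _ _ ⟨rfl, rfl⟩
    exact hdτ hrel x

end DiagramDeg
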